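/- Let V be a real vector space, T : V × V × V → V an ℝ-trilinear map which is symmetric in its first two arguments, T(x,y,z) = T(y,x,z), and satisfies the cyclic identity T(x,y,z) + T(z,x,y) + T(y,z,x) = 0, and let J : V → V be ℝ-linear with J ∘ J = −id such that T(Jx, Jy, z) = T(x,y,z) and T(x,y,Jz) = J(T(x,y,z)) for all x,y,z ∈ V. Then for every x ∈ V, setting y := Jx, all curvature terms vanish: T(x,x,x) = 0, T(y,y,y) = 0, T(x,y,x) = 0, T(x,x,y) = 0, T(x,y,y) = 0, and T(y,y,x) = 0; in particular the contractions SR_x := T(x,x,y) − T(x,y,x) and SR_y := T(y,x,y) − T(y,y,x) are zero. -/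
import Mathlib


theorem kaehler_curvature_terms_vanish
    {V : Type*} [AddCommGroup V] [Module ℝ V]
    (T : V →ₗ[ℝ] V →ₗ[ℝ] V →ₗ[ℝ] V) (J : V →ₗ[ℝ] V)
    (hJ : ∀ v : V, J (J v) = -v)
    (hsym : ∀ x y z : V, T x y z = T y x z)
    (hcyc : ∀ x y z : V, T x y z + T z x y + T y z x = 0)
    (hTJJ : ∀ x y z : V, T (J x) (J y) z = T x y z)
    (hTJ : ∀ x y z : V, T x y (J z) = J (T x y z)) :
    ∀ x : V,
      T x x x = 0 ∧
      T (J x) (J x) (J x) = 0 ∧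
      T x (J x) x = 0 ∧
      T x x (J x) = 0 ∧
      T x (J x) (J x) = 0 ∧
      T (J x) (J x) x = 0 ∧
      T x x (J x) - T x (J x) x = 0 ∧
      T (J x) x (J x) - T (J x) (J x) x = 0 := by
  intro x
  have h1 : T x x x = 0 := by
    have h := hcyc x x x
    have h3 : (3:ℝ) • T x x x = 0 := by rw [← h]; module
    exact (smul_eq_zero.mp h3).resolve_left (by norm_num)
  have h4 : T x x (J x) = 0 := by rw [hTJ, h1, map_zero]
  have h3 : T x (J x) x = 0 := by
    have hc := hcyc x x (J x)
    have hs := hsym (J x) x x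
    rw [h4, hs] at hc
    have h2 : (2:ℝ) • T x (J x) x = 0 := by
      rw [show (2:ℝ) • T x (J x) x = 0 + T x (J x) x + T x (J x) x by module, hc]
    exact (smul_eq_zero.mp h2).resolve_left (by norm_num)
  have h5 : T x (J x) (J x) = 0 := by rw [hTJ, h3, map_zero]
  have h6 : T (J x) (J x) x = 0 := by rw [hTJJ, h1]
  have h2 : T (J x) (J x) (J x) = 0 := by rw [hTJJ, h4]
  refine ⟨h1, h2, h3, h4, h5, h6, by rw [h3, h4, sub_zero], ?_⟩
  rw [hsym (J x) x (J x), h5, h6, sub_zero]
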